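/- Let 0 < q < 1, λ > 0, and 0 < p < 1. For every sequence (a_n)_{n∈ℤ} of nonnegative reals with ∑_{n∈ℤ} a_n^p < ∞, the reverse inequality ∑_{n∈ℤ} (q^{-λn} ∑_{k=n}^∞ q^{λk} a_k)^p ≥ (1-q^λ)^{-p} ∑_{n∈ℤ} a_n^p holds. -/

import Mathlib

open scoped ENNReal

open MeasureTheory in
lemma holder_step' {p : ℝ} (hp0 : 0 < p) (hp1 : p < 1) (w b : ℕ → ℝ≥0∞) :
    ∑' m, w m * (b m) ^ p ≤ (∑' m, w m * b m) ^ p * (∑' m, w m) ^ (1 - p) := by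
  have hpq : (1/p).HolderConjugate (1/(1-p)) :=
    Real.holderConjugate_one_div hp0 (by linarith) (by ring)
  have H := ENNReal.lintegral_mul_le_Lp_mul_Lq (Measure.count : Measure ℕ) hpq
    (f := fun m => (w m * b m) ^ p) (g := fun m => (w m) ^ (1 - p))
    (measurable_of_countable _).aemeasurable (measurable_of_countable _).aemeasurable
  simp only [Pi.mul_apply, MeasureTheory.lintegral_count] at H
  have h1 : ∀ m, (w m * b m) ^ p * (w m) ^ (1 - p) = w m * (b m) ^ p := by
    intro m
    rw [ENNReal.mul_rpow_of_nonneg _ _ hp0.le, mul_right_comm, ← ENNReal.rpow_add_of_nonneg _ _ hp0.le (by linarith)]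
    simp
  have h2 : ∀ m, ((w m * b m) ^ p) ^ (1/p) = w m * b m := by
    intro m
    rw [← ENNReal.rpow_mul, mul_one_div, div_self hp0.ne', ENNReal.rpow_one]
  have h3 : ∀ m, ((w m) ^ (1 - p)) ^ (1/(1-p)) = w m := by
    intro m
    rw [← ENNReal.rpow_mul, mul_one_div, div_self (by linarith : (1:ℝ) - p ≠ 0), ENNReal.rpow_one]
  simp only [h1, h2, h3, one_div_one_div] at H
  exact H

lemma jensen_step {p Q : ℝ} (hp0 : 0 < p) (hp1 : p < 1) (hQ0 : 0 < Q) (hQ1 : Q < 1)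
    (b : ℕ → ℝ≥0∞) :
    ENNReal.ofReal ((1 - Q) ^ (1 - p)) * ∑' m, ENNReal.ofReal (Q ^ m) * (b m) ^ p
      ≤ (∑' m, ENNReal.ofReal (Q ^ m) * b m) ^ p := by
  have hsum : ∑' m : ℕ, ENNReal.ofReal (Q ^ m) = ENNReal.ofReal (1 - Q)⁻¹ := by
    rw [← ENNReal.ofReal_tsum_of_nonneg (fun m => by positivity)
      (summable_geometric_of_lt_one hQ0.le hQ1), tsum_geometric_of_lt_one hQ0.le hQ1]
  have hC : ENNReal.ofReal ((1 - Q) ^ (1 - p)) * (∑' m : ℕ, ENNReal.ofReal (Q ^ m)) ^ (1 - p) = 1 := by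
    have h1Q : (0:ℝ) < 1 - Q := by linarith
    rw [hsum, ENNReal.ofReal_rpow_of_pos (inv_pos.2 h1Q),
      ← ENNReal.ofReal_mul (Real.rpow_nonneg h1Q.le _),
      ← Real.mul_rpow h1Q.le (inv_pos.2 h1Q).le, mul_inv_cancel₀ h1Q.ne',
      Real.one_rpow, ENNReal.ofReal_one]
  calc ENNReal.ofReal ((1 - Q) ^ (1 - p)) * ∑' m, ENNReal.ofReal (Q ^ m) * (b m) ^ p
      ≤ ENNReal.ofReal ((1 - Q) ^ (1 - p)) *
        ((∑' m, ENNReal.ofReal (Q ^ m) * b m) ^ p * (∑' m, ENNReal.ofReal (Q ^ m)) ^ (1 - p)) :=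
        mul_le_mul_right (holder_step' hp0 hp1 _ b) _
    _ = (∑' m, ENNReal.ofReal (Q ^ m) * b m) ^ p *
        (ENNReal.ofReal ((1 - Q) ^ (1 - p)) * (∑' m, ENNReal.ofReal (Q ^ m)) ^ (1 - p)) := by ring
    _ = (∑' m, ENNReal.ofReal (Q ^ m) * b m) ^ p := by rw [hC, mul_one]

theorem copson_Z_reverse (q l p : ℝ) (hq : 0 < q) (hq1 : q < 1) (hl : 0 < l)
    (hp0 : 0 < p) (hp1 : p < 1) (a : ℤ → ℝ≥0∞)
    (hfin : (∑' n : ℤ, (a n) ^ p) ≠ ⊤) :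
    ENNReal.ofReal ((1 - q ^ l) ^ (-p)) * ∑' n : ℤ, (a n) ^ p
      ≤ ∑' n : ℤ, ((ENNReal.ofReal q) ^ (-(l * (n : ℝ))) *
          ∑' m : ℕ, (ENNReal.ofReal q) ^ (l * ((n : ℝ) + (m : ℝ))) * a (n + m)) ^ p := by
  set Q : ℝ := q ^ l with hQdef
  have hQ0 : 0 < Q := Real.rpow_pos_of_pos hq l
  have hQ1 : Q < 1 := Real.rpow_lt_one hq.le hq1 hl
  have hc0 : (ENNReal.ofReal q) ≠ 0 := by simp [hq, hq.le]
  have hct : (ENNReal.ofReal q) ≠ ⊤ := ENNReal.ofReal_ne_top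
  -- simplify the inner expression
  have key : ∀ n : ℤ, (ENNReal.ofReal q) ^ (-(l * (n : ℝ))) *
      ∑' m : ℕ, (ENNReal.ofReal q) ^ (l * ((n : ℝ) + (m : ℝ))) * a (n + m)
      = ∑' m : ℕ, ENNReal.ofReal (Q ^ m) * a (n + m) := by
    intro n
    rw [← ENNReal.tsum_mul_left]
    congr 1; funext m
    rw [← mul_assoc, ← ENNReal.rpow_add _ _ hc0 hct]
    congr 2
    · rw [ENNReal.ofReal_rpow_of_pos hq]
      congr 1
      rw [hQdef, ← Real.rpow_natCast (q ^ l) m, ← Real.rpow_mul hq.le]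
      ring_nf
  simp only [key]
  -- Jensen step for each n
  have step : ∀ n : ℤ, ENNReal.ofReal ((1 - Q) ^ (1 - p)) *
      ∑' m : ℕ, ENNReal.ofReal (Q ^ m) * (a (n + m)) ^ p
      ≤ (∑' m : ℕ, ENNReal.ofReal (Q ^ m) * a (n + m)) ^ p :=
    fun n => jensen_step hp0 hp1 hQ0 hQ1 _
  calc ENNReal.ofReal ((1 - Q) ^ (-p)) * ∑' n : ℤ, (a n) ^ p
      = ENNReal.ofReal ((1 - Q) ^ (1 - p)) * ∑' n : ℤ, ∑' m : ℕ,
        ENNReal.ofReal (Q ^ m) * (a (n + m)) ^ p := by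
        rw [ENNReal.tsum_comm]
        have htrans : ∀ m : ℕ, ∑' n : ℤ, (a (n + (m : ℤ))) ^ p = ∑' n : ℤ, (a n) ^ p :=
          fun m => (Equiv.addRight (m : ℤ)).tsum_eq (fun n => (a n) ^ p)
        simp only [ENNReal.tsum_mul_left, htrans]
        rw [ENNReal.tsum_mul_right, ← mul_assoc]
        congr 1
        have hsum : ∑' m : ℕ, ENNReal.ofReal (Q ^ m) = ENNReal.ofReal (1 - Q)⁻¹ := by
          rw [← ENNReal.ofReal_tsum_of_nonneg (fun m => by positivity)
            (summable_geometric_of_lt_one hQ0.le hQ1), tsum_geometric_of_lt_one hQ0.le hQ1]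
        rw [hsum, ← ENNReal.ofReal_mul (Real.rpow_nonneg (by linarith) _)]
        congr 1
        rw [← Real.rpow_neg_one (1 - Q), ← Real.rpow_add (by linarith)]
        congr 1
        ring
    _ = ∑' n : ℤ, ENNReal.ofReal ((1 - Q) ^ (1 - p)) * ∑' m : ℕ,
        ENNReal.ofReal (Q ^ m) * (a (n + m)) ^ p := ENNReal.tsum_mul_left.symm
    _ ≤ ∑' n : ℤ, (∑' m : ℕ, ENNReal.ofReal (Q ^ m) * a (n + m)) ^ p := ENNReal.tsum_le_tsum step
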